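/- arXiv:1709.00153 — 2 statements merged into one kernel-verified Lean document; each statement's English description precedes it below -/
import Mathlib

section
/- Suppose N : (0,1] → ℝ is positive and differentiable with (d/dρ)(ln N(ρ)) ≥ -C whenever N(ρ) ≥ C₀, for constants C, C₀ > 0. Then for all 0 < r₁ < r₂ ≤ 1, N(r₁) ≤ e^C · max{C₀, N(r₂)}. -/
open Real Set

/-- Key lemma: on `[a,b] ⊆ (0,1]` where `N ≥ C₀`, we have
`log N(a) ≤ log N(b) + C (b - a)`. -/
lemma stmt5_aux (N : ℝ → ℝ) (C C₀ : ℝ)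
    (hpos : ∀ ρ ∈ Ioc (0:ℝ) 1, 0 < N ρ)
    (hdiff : ∀ ρ ∈ Ioc (0:ℝ) 1, DifferentiableAt ℝ N ρ)
    (hmono : ∀ ρ ∈ Ioc (0:ℝ) 1, C₀ ≤ N ρ → -C ≤ deriv (fun t => Real.log (N t)) ρ)
    (a b : ℝ) (ha : 0 < a) (hab : a ≤ b) (hb : b ≤ 1)
    (hge : ∀ ρ ∈ Icc a b, C₀ ≤ N ρ) :
    Real.log (N a) ≤ Real.log (N b) + C * (b - a) := by
  have hsub : Icc a b ⊆ Ioc (0:ℝ) 1 := fun ρ hρ => ⟨lt_of_lt_of_le ha hρ.1, le_trans hρ.2 hb⟩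
  set g : ℝ → ℝ := fun ρ => Real.log (N ρ) + C * ρ with hg
  have hdg : ∀ ρ ∈ Icc a b, DifferentiableAt ℝ g ρ := by
    intro ρ hρ
    have hρ' := hsub hρ
    have h1 : DifferentiableAt ℝ (fun t => Real.log (N t)) ρ :=
      (hdiff ρ hρ').log (ne_of_gt (hpos ρ hρ'))
    exact h1.add ((differentiableAt_id.const_mul C))
  have hmonog : MonotoneOn g (Icc a b) := by
    apply monotoneOn_of_deriv_nonneg (convex_Icc a b)
    · exact fun ρ hρ => (hdg ρ hρ).continuousAt.continuousWithinAt
    · intro ρ hρ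
      rw [interior_Icc] at hρ
      exact (hdg ρ (Ioo_subset_Icc_self hρ)).differentiableWithinAt
    · intro ρ hρ
      rw [interior_Icc] at hρ
      have hρI : ρ ∈ Icc a b := Ioo_subset_Icc_self hρ
      have hρ' := hsub hρI
      have h1 : DifferentiableAt ℝ (fun t => Real.log (N t)) ρ :=
        (hdiff ρ hρ').log (ne_of_gt (hpos ρ hρ'))
      have h2 : DifferentiableAt ℝ (fun t : ℝ => C * t) ρ :=
        differentiableAt_id.const_mul C
      have hd : deriv g ρ = deriv (fun t => Real.log (N t)) ρ + C := by
        have h3 : deriv (fun t : ℝ => C * t) ρ = C := by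
          simpa using ((hasDerivAt_id ρ).const_mul C).deriv
        rw [hg, deriv_fun_add h1 h2, h3]
      rw [hd]
      have := hmono ρ hρ' (hge ρ hρI)
      linarith
  have := hmonog (left_mem_Icc.mpr hab) (right_mem_Icc.mpr hab) hab
  simp only [hg] at this
  linarith

/-- If `N` is positive and differentiable on `(0,1]` with `(ln N)' ≥ -C` wherever `N ≥ C₀`,
then `N(r₁) ≤ e^C · max{C₀, N(r₂)}` for all `0 < r₁ < r₂ ≤ 1`. -/
theorem stmt5 (N : ℝ → ℝ) (C C₀ : ℝ) (hC : 0 < C) (hC₀ : 0 < C₀)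
    (hpos : ∀ ρ ∈ Ioc (0:ℝ) 1, 0 < N ρ)
    (hdiff : ∀ ρ ∈ Ioc (0:ℝ) 1, DifferentiableAt ℝ N ρ)
    (hmono : ∀ ρ ∈ Ioc (0:ℝ) 1, C₀ ≤ N ρ → -C ≤ deriv (fun t => Real.log (N t)) ρ) :
    ∀ r₁ r₂ : ℝ, 0 < r₁ → r₁ < r₂ → r₂ ≤ 1 →
      N r₁ ≤ Real.exp C * max C₀ (N r₂) := by
  intro r₁ r₂ hr₁ h12 hr₂
  have hr₁1 : r₁ ∈ Ioc (0:ℝ) 1 := ⟨hr₁, le_of_lt (lt_of_lt_of_le h12 hr₂)⟩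
  have hr₂1 : r₂ ∈ Ioc (0:ℝ) 1 := ⟨lt_trans hr₁ h12, hr₂⟩
  have hexp1 : (1:ℝ) ≤ Real.exp C := by
    nlinarith [Real.add_one_le_exp C]
  have hmaxpos : 0 < max C₀ (N r₂) := lt_of_lt_of_le hC₀ (le_max_left _ _)
  -- trivial case: N r₁ ≤ C₀
  by_cases hcase : N r₁ ≤ C₀
  · calc N r₁ ≤ C₀ := hcase
      _ ≤ max C₀ (N r₂) := le_max_left _ _
      _ ≤ Real.exp C * max C₀ (N r₂) := le_mul_of_one_le_left hmaxpos.le hexp1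
  push_neg at hcase
  -- subcase split on whether N dips below C₀ on [r₁, r₂]
  set A : Set ℝ := {ρ ∈ Icc r₁ r₂ | N ρ ≤ C₀} with hA
  have hcont : ContinuousOn N (Icc r₁ r₂) := fun ρ hρ =>
    (hdiff ρ ⟨lt_of_lt_of_le hr₁ hρ.1, le_trans hρ.2 hr₂⟩).continuousAt.continuousWithinAt
  by_cases hAne : A.Nonempty
  · -- N hits C₀; let s be the first time
    have hAclosed : IsClosed A := by
      have := hcont.preimage_isClosed_of_isClosed isClosed_Icc (isClosed_Iic (a := C₀))
      convert this using 1
      rfl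
    have hAbdd : BddBelow A := ⟨r₁, fun ρ hρ => hρ.1.1⟩
    set s := sInf A with hs
    have hsA : s ∈ A := hAclosed.csInf_mem hAne hAbdd
    have hsIcc : s ∈ Icc r₁ r₂ := hsA.1
    have hsle : N s ≤ C₀ := hsA.2
    have hr₁s : r₁ < s := by
      rcases lt_or_eq_of_le hsIcc.1 with h | h
      · exact h
      · exact absurd hsle (by rw [← h]; exact not_le.mpr hcase)
    -- N ≥ C₀ on [r₁, s) since s is the infimum
    have hgeIco : ∀ ρ ∈ Ico r₁ s, C₀ ≤ N ρ := by
      intro ρ hρ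
      by_contra hlt
      push_neg at hlt
      have hρA : ρ ∈ A := ⟨⟨hρ.1, le_trans hρ.2.le hsIcc.2⟩, hlt.le⟩
      exact absurd (csInf_le hAbdd hρA) (not_le.mpr hρ.2)
    -- by continuity, also N s ≥ C₀
    have hgeIcc : ∀ ρ ∈ Icc r₁ s, C₀ ≤ N ρ := by
      set B : Set ℝ := {ρ ∈ Icc r₁ s | C₀ ≤ N ρ} with hB
      have hcont' : ContinuousOn N (Icc r₁ s) := hcont.mono (Icc_subset_Icc_right hsIcc.2)
      have hBclosed : IsClosed B := by
        have := hcont'.preimage_isClosed_of_isClosed isClosed_Icc (isClosed_Ici (a := C₀))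
        convert this using 1
        rfl
      have hsubB : Ico r₁ s ⊆ B := fun ρ hρ => ⟨⟨hρ.1, hρ.2.le⟩, hgeIco ρ hρ⟩
      have hclos : Icc r₁ s ⊆ B := by
        rw [← closure_Ico (ne_of_lt hr₁s)]
        exact hBclosed.closure_subset_iff.mpr hsubB
      exact fun ρ hρ => (hclos hρ).2
    have hkey := stmt5_aux N C C₀ hpos hdiff hmono r₁ s hr₁ hr₁s.le
      (le_trans hsIcc.2 hr₂) hgeIcc
    have hsr : s - r₁ ≤ 1 := by
      have := hsIcc.2; linarith [hr₂, hr₁]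
    have hlog : Real.log (N r₁) ≤ Real.log C₀ + C := by
      have h1 : Real.log (N s) ≤ Real.log C₀ :=
        Real.log_le_log (hpos s ⟨lt_trans hr₁ hr₁s, le_trans hsIcc.2 hr₂⟩) hsle
      have h2 : C * (s - r₁) ≤ C := by nlinarith
      linarith
    have : N r₁ ≤ Real.exp C * C₀ := by
      have := Real.exp_le_exp.mpr hlog
      rwa [Real.exp_log (hpos r₁ hr₁1), Real.exp_add, Real.exp_log hC₀, mul_comm] at this
    calc N r₁ ≤ Real.exp C * C₀ := this
      _ ≤ Real.exp C * max C₀ (N r₂) :=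
        mul_le_mul_of_nonneg_left (le_max_left _ _) (Real.exp_pos C).le
  · -- N ≥ C₀ on all of [r₁, r₂]
    have hge : ∀ ρ ∈ Icc r₁ r₂, C₀ ≤ N ρ := by
      intro ρ hρ
      by_contra hlt
      push_neg at hlt
      exact hAne ⟨ρ, hρ, hlt.le⟩
    have hkey := stmt5_aux N C C₀ hpos hdiff hmono r₁ r₂ hr₁ h12.le hr₂ hge
    have hlog : Real.log (N r₁) ≤ Real.log (N r₂) + C := by
      have h2 : C * (r₂ - r₁) ≤ C := by nlinarith
      linarith
    have : N r₁ ≤ Real.exp C * N r₂ := by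
      have := Real.exp_le_exp.mpr hlog
      rwa [Real.exp_log (hpos r₁ hr₁1), Real.exp_add, Real.exp_log (hpos r₂ hr₂1),
        mul_comm] at this
    calc N r₁ ≤ Real.exp C * N r₂ := this
      _ ≤ Real.exp C * max C₀ (N r₂) :=
        mul_le_mul_of_nonneg_left (le_max_right _ _) (Real.exp_pos C).le
end

section
/- Let f : [-a, a] → ℝ be the restriction of an analytic function along a line segment, with ‖f‖_{L^∞} ≤ M, |f(0)| ≥ m > 0, and suppose f extends analytically with the same bound M to a complex neighborhood of [-a,a] of fixed proportional size (as in Lemma 2.3.2 of Han–Lin). Then the number of zeros of f in [-a, a] is at most C ln(M/m), where C is an absolute constant depending only on the proportion of the neighborhood. -/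
open Metric Real Set

lemma key17 (a : ℝ) (ha : 0 < a) : ∀ (n : ℕ) (K : ℝ) (f : ℂ → ℂ),
    DifferentiableOn ℂ f (ball (0:ℂ) (2*a)) →
    (∀ w ∈ sphere (0:ℂ) (19*a/10), ‖f w‖ ≤ K) →
    ∀ T : Finset ℝ, T.card = n → (∀ x ∈ T, x ∈ Icc (-a) a ∧ f (x:ℂ) = 0) →
    ‖f 0‖ ≤ K * (5/8)^n := by
  intro n
  induction n with
  | zero =>
    intro K f hf hK T hcard hT
    have hsub : closedBall (0:ℂ) (19*a/10) ⊆ ball (0:ℂ) (2*a) :=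
      closedBall_subset_ball (by linarith)
    have hd : DiffContOnCl ℂ f (ball (0:ℂ) (19*a/10)) := by
      apply DifferentiableOn.diffContOnCl
      rw [closure_ball (0:ℂ) (by positivity : (19*a/10 : ℝ) ≠ 0)]
      exact hf.mono hsub
    have hfr : ∀ z ∈ frontier (ball (0:ℂ) (19*a/10)), ‖f z‖ ≤ K := by
      rw [frontier_ball (0:ℂ) (by positivity : (19*a/10 : ℝ) ≠ 0)]
      exact hK
    have hz : (0:ℂ) ∈ closure (ball (0:ℂ) (19*a/10)) := by
      rw [closure_ball (0:ℂ) (by positivity : (19*a/10 : ℝ) ≠ 0)]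
      exact mem_closedBall_self (by positivity)
    simpa using Complex.norm_le_of_forall_mem_frontier_norm_le isBounded_ball hd hfr hz
  | succ n ih =>
    intro K f hf hK T hcard hT
    have hK0 : 0 ≤ K := by
      have hmem : ((19*a/10 : ℝ) : ℂ) ∈ sphere (0:ℂ) (19*a/10) := by
        rw [mem_sphere_zero_iff_norm, Complex.norm_real, Real.norm_eq_abs,
          abs_of_pos (by positivity)]
      exact le_trans (norm_nonneg _) (hK _ hmem)
    obtain ⟨x, hxT⟩ : T.Nonempty := Finset.card_pos.mp (by omega)
    obtain ⟨⟨hx1, hx2⟩, hfx⟩ := hT x hxT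
    have hxa : |x| ≤ a := abs_le.mpr ⟨hx1, hx2⟩
    have hxball : (x:ℂ) ∈ ball (0:ℂ) (2*a) := by
      rw [mem_ball_zero_iff, Complex.norm_real, Real.norm_eq_abs]
      linarith [hxa]
    set g : ℂ → ℂ := dslope f (x:ℂ) with hg_def
    have hg : DifferentiableOn ℂ g (ball (0:ℂ) (2*a)) := by
      intro y hy
      rcases eq_or_ne y (x:ℂ) with rfl | hne
      · obtain ⟨p, hp⟩ := hf.analyticAt (isOpen_ball.mem_nhds hy)
        exact hp.has_fpower_series_dslope_fslope.analyticAt.differentiableAt.differentiableWithinAt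
      · exact (differentiableWithinAt_dslope_of_ne hne).2 (hf y hy)
    set h : ℂ → ℂ := fun z => g z * (((4*a^2:ℝ):ℂ) - (x:ℂ)*z) with hh_def
    have hh : DifferentiableOn ℂ h (ball (0:ℂ) (2*a)) :=
      hg.mul ((differentiable_const _|>.sub ((differentiable_id.const_mul _))).differentiableOn)
    have hhK : ∀ w ∈ sphere (0:ℂ) (19*a/10), ‖h w‖ ≤ (5/2*a) * K := by
      intro w hw'
      have hw : ‖w‖ = 19*a/10 := mem_sphere_zero_iff_norm.mp hw'
      have hwx : w ≠ (x:ℂ) := by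
        intro e
        rw [e, Complex.norm_real, Real.norm_eq_abs] at hw
        linarith [hxa, hw.symm.le.trans hxa]
      have hwxpos : 0 < ‖w - (x:ℂ)‖ := by
        rw [norm_pos_iff, sub_ne_zero]; exact hwx
      have hgw : g w = f w / (w - (x:ℂ)) := by
        rw [hg_def, dslope_of_ne f hwx, slope_def_field, hfx, sub_zero]
      have hwn : w.re^2 + w.im^2 = (19*a/10)^2 := by
        rw [← hw, Complex.sq_norm, Complex.normSq_apply]; ring
      have hA : ‖(((4*a^2:ℝ):ℂ)) - (x:ℂ)*w‖^2 = (4*a^2 - x*w.re)^2 + (x*w.im)^2 := by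
        rw [Complex.sq_norm, Complex.normSq_apply]
        simp [Complex.sub_re, Complex.sub_im, Complex.mul_re, Complex.mul_im, pow_two]
      have hB : ‖w - (x:ℂ)‖^2 = (w.re - x)^2 + w.im^2 := by
        rw [Complex.sq_norm, Complex.normSq_apply]
        simp
        ring
      have hkey : ‖(((4*a^2:ℝ):ℂ)) - (x:ℂ)*w‖ ≤ (5/2*a) * ‖w - (x:ℂ)‖ := by
        apply le_of_pow_le_pow_left₀ two_ne_zero (by positivity)
        rw [mul_pow, hA, hB]
        nlinarith [hwn, sq_nonneg (19*x - 10*w.re), mul_nonneg (sub_nonneg.2 hx2)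
          (by linarith : (0:ℝ) ≤ a + x), sq_nonneg w.im, mul_pos ha ha,
          mul_nonneg (mul_nonneg (sub_nonneg.2 hx2) (by linarith : (0:ℝ) ≤ a + x)) (sq_nonneg w.im),
          mul_nonneg (mul_nonneg (sub_nonneg.2 hx2) (by linarith : (0:ℝ) ≤ a + x)) (mul_pos ha ha).le,
          mul_nonneg (sq_nonneg (19*x - 10*w.re)) (mul_pos ha ha).le]
      calc ‖h w‖ = ‖f w‖ * (‖(((4*a^2:ℝ):ℂ)) - (x:ℂ)*w‖ / ‖w - (x:ℂ)‖) := by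
            rw [hh_def]; simp only [hgw]; rw [norm_mul, norm_div]; ring
        _ ≤ K * (5/2*a) :=
            mul_le_mul (hK w hw') ((div_le_iff₀ hwxpos).2 hkey) (by positivity) hK0
        _ = (5/2*a) * K := mul_comm _ _
    have hT' : ∀ y ∈ T.erase x, y ∈ Icc (-a) a ∧ h (y:ℂ) = 0 := by
      intro y hy
      obtain ⟨hyx, hyT⟩ := Finset.mem_erase.mp hy
      obtain ⟨hyI, hfy⟩ := hT y hyT
      refine ⟨hyI, ?_⟩
      have hgy : g (y:ℂ) = 0 := by
        rw [hg_def, dslope_of_ne f (by exact_mod_cast hyx), slope_def_field, hfy, hfx]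
        simp
      rw [hh_def]; simp [hgy]
    have hcard' : (T.erase x).card = n := by
      rw [Finset.card_erase_of_mem hxT, hcard]; omega
    have hih := ih ((5/2*a) * K) h hh hhK (T.erase x) hcard' hT'
    have hf0 : f 0 = (-(x:ℂ)) * g 0 := by
      have e := sub_smul_dslope f (x:ℂ) 0
      rw [hfx, sub_zero, smul_eq_mul] at e
      rw [← e, hg_def]; ring_nf
    have hh0 : h 0 = (((4*a^2:ℝ):ℂ)) * g 0 := by rw [hh_def]; ring_nf
    have hg0 : ‖g 0‖ = ‖h 0‖ / (4*a^2) := by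
      rw [hh0, norm_mul, Complex.norm_real, Real.norm_eq_abs, abs_of_pos (by positivity)]
      field_simp
    rw [hf0, norm_mul, norm_neg, Complex.norm_real, Real.norm_eq_abs, hg0]
    calc |x| * (‖h 0‖ / (4*a^2)) ≤ a * ((5/2*a) * K * (5/8)^n / (4*a^2)) := by
          gcongr
      _ = K * (5/8)^(n+1) := by field_simp; ring

/-- One-dimensional zero-counting lemma (cf. Han–Lin, Lemma 2.3.2): if `f` is holomorphic on
the disk of radius `2a` with `|f| ≤ M` there and `|f(0)| ≥ m > 0`, then the number of real
zeros of `f` in `[-a,a]` is at most `C ln(M/m)` for an absolute constant `C`. -/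
theorem stmt17 : ∃ C : ℝ, 0 < C ∧
    ∀ (a M m : ℝ) (f : ℂ → ℂ), 0 < a → 0 < m → m ≤ M →
      DifferentiableOn ℂ f (ball (0 : ℂ) (2 * a)) →
      (∀ z ∈ ball (0 : ℂ) (2 * a), ‖f z‖ ≤ M) →
      m ≤ ‖f 0‖ →
      ({x : ℝ | x ∈ Icc (-a) a ∧ f (x : ℂ) = 0}).Finite ∧
      (({x : ℝ | x ∈ Icc (-a) a ∧ f (x : ℂ) = 0}).ncard : ℝ) ≤ C * Real.log (M / m) := by
  refine ⟨(Real.log (8/5))⁻¹, inv_pos.2 (Real.log_pos (by norm_num)), ?_⟩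
  intro a M m f ha hm hmM hf hM hm0
  set S := {x : ℝ | x ∈ Icc (-a) a ∧ f (x:ℂ) = 0} with hS_def
  have hlog : 0 < Real.log (8/5) := Real.log_pos (by norm_num)
  have hsphere : ∀ w ∈ sphere (0:ℂ) (19*a/10), ‖f w‖ ≤ M := by
    intro w hw
    apply hM
    rw [mem_ball_zero_iff]
    rw [mem_sphere_zero_iff_norm] at hw
    rw [hw]; linarith
  -- every finite subset of S has card bounded
  have hbound : ∀ T : Finset ℝ, ↑T ⊆ S → (T.card : ℝ) ≤ (Real.log (8/5))⁻¹ * Real.log (M / m) := by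
    intro T hTS
    have hz : ∀ x ∈ T, x ∈ Icc (-a) a ∧ f (x:ℂ) = 0 := fun x hx => hTS hx
    have hk := key17 a ha T.card M f hf hsphere T rfl hz
    have h1 : m ≤ M * (5/8)^T.card := le_trans hm0 hk
    have h2 : (8/5 : ℝ)^T.card ≤ M / m := by
      rw [le_div_iff₀ hm]
      calc (8/5:ℝ)^T.card * m ≤ (8/5:ℝ)^T.card * (M * (5/8)^T.card) := by
            apply mul_le_mul_of_nonneg_left h1 (by positivity)
        _ = M * ((8/5:ℝ) * (5/8))^T.card := by rw [mul_pow]; ring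
        _ = M := by norm_num
    have h3 : (T.card : ℝ) * Real.log (8/5) ≤ Real.log (M / m) := by
      calc (T.card : ℝ) * Real.log (8/5) = Real.log ((8/5:ℝ)^T.card) := by
            rw [Real.log_pow]
        _ ≤ Real.log (M / m) := Real.log_le_log (by positivity) h2
    rw [inv_mul_eq_div, le_div_iff₀ hlog]
    exact h3
  have hfin : S.Finite := by
    by_contra hinf
    have hinf' : S.Infinite := hinf
    obtain ⟨t, hts, htfin, htcard⟩ :=
      hinf'.exists_subset_ncard_eq (⌊(Real.log (8/5))⁻¹ * Real.log (M / m)⌋₊ + 1)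
    have hcard := hbound htfin.toFinset (by rwa [Set.Finite.coe_toFinset])
    rw [Set.ncard_eq_toFinset_card t htfin] at htcard
    rw [htcard] at hcard
    push_cast at hcard
    have := Nat.lt_floor_add_one ((Real.log (8/5))⁻¹ * Real.log (M / m))
    linarith
  refine ⟨hfin, ?_⟩
  have := hbound hfin.toFinset (by rw [Set.Finite.coe_toFinset])
  rwa [Set.ncard_eq_toFinset_card S hfin]
end
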